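/- Multiplicity-free decomposition of the crystal tensor product: for natural numbers a, b, the set of highest-weight elements {(k, l) : k ≤ a, l ≤ b, ẽ(k, l) = none} equals {(0, l) : 0 ≤ l ≤ min(a, b)}, and the map (0, l) ↦ a + b − 2l is a bijection from this set onto {c ∈ ℕ : |a − b| ≤ c ≤ a + b and c ≡ a + b (mod 2)}. (In spin language: B(j₁) ⊗ B(j₂) decomposes with multiplicity one into components of highest weights J = |j₁−j₂|, |j₁−j₂|+1, …, j₁+j₂.) -/
import Mathlib


/-- Kashiwara's lowering operator `f̃` on the crystal tensor product `B_a ⊗ B_b`,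
modeled on pairs `(k, l)` of lowering-step counters (`k ≤ a`, `l ≤ b`):
`f̃(k,l) = (k+1, l)` if `a - k > l`; `f̃(k,l) = (k, l+1)` if `a - k ≤ l` and `l < b`;
`f̃(k,l) = none` otherwise. -/
def ftil (a b : ℕ) (p : ℕ × ℕ) : Option (ℕ × ℕ) :=
  if p.2 < a - p.1 then some (p.1 + 1, p.2)
  else if p.2 < b then some (p.1, p.2 + 1)
  else none

/-- Kashiwara's raising operator `ẽ` on the crystal tensor product `B_a ⊗ B_b`:
`ẽ(k,l) = (k-1, l)` if `a - k ≥ l` and `k > 0`; `ẽ(k,l) = (k, l-1)` if `a - k < l`;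
`ẽ(k,l) = none` otherwise. -/
def etil (a b : ℕ) (p : ℕ × ℕ) : Option (ℕ × ℕ) :=
  if p.2 ≤ a - p.1 ∧ 0 < p.1 then some (p.1 - 1, p.2)
  else if a - p.1 < p.2 then some (p.1, p.2 - 1)
  else none

/-- `n`-fold application of a partially defined crystal operator, propagating `none`. -/
def iterOpt (f : ℕ × ℕ → Option (ℕ × ℕ)) (n : ℕ) (p : ℕ × ℕ) : Option (ℕ × ℕ) :=
  (fun o => o.bind f)^[n] (some p)

/-- Multiplicity-free decomposition of the crystal tensor product: the set of
highest-weight elements equals `{(0, l) : l ≤ min a b}`, and `(0, l) ↦ a + b - 2l`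
is a bijection from it onto `{c : |a - b| ≤ c ≤ a + b, c ≡ a + b (mod 2)}`. -/
theorem crystal_tensor_decomposition (a b : ℕ) :
    {p : ℕ × ℕ | p.1 ≤ a ∧ p.2 ≤ b ∧ etil a b p = none}
      = {p : ℕ × ℕ | p.1 = 0 ∧ p.2 ≤ min a b} ∧
    Set.BijOn (fun p : ℕ × ℕ => a + b - 2 * p.2)
      {p : ℕ × ℕ | p.1 = 0 ∧ p.2 ≤ min a b}
      {c : ℕ | ((a : ℤ) - (b : ℤ)).natAbs ≤ c ∧ c ≤ a + b ∧ c % 2 = (a + b) % 2} := by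
  constructor
  · ext p
    simp only [Set.mem_setOf_eq, etil]
    constructor
    · rintro ⟨h1, h2, h3⟩
      split_ifs at h3 with h4 h5
      omega
    · rintro ⟨h0, hl⟩
      refine ⟨by omega, by omega, ?_⟩
      split_ifs with h h'
      · exfalso; omega
      · exfalso; omega
      · rfl
  · refine ⟨?_, ?_, ?_⟩
    · rintro ⟨k, l⟩ ⟨h0, hl⟩
      simp only [Set.mem_setOf_eq] at *
      omega
    · rintro ⟨k, l⟩ ⟨h0, hl⟩ ⟨k', l'⟩ ⟨h0', hl'⟩ h
      simp only [Set.mem_setOf_eq, Prod.mk.injEq] at *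
      omega
    · intro c hc
      simp only [Set.mem_setOf_eq] at hc
      refine ⟨(0, (a + b - c) / 2), ⟨rfl, by omega⟩, ?_⟩
      simp only
      omega
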